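/- arXiv:2510.23871 — 3 statements merged into one kernel-verified Lean document; each statement's English description precedes it below -/
import Mathlib

section
/- Let G be a trivial group, I and Λ finite index sets, and P a regular Λ×I matrix with entries in G⁰ containing at least one zero entry, and let A = [[0,0,×,×],[×,×,0,0]] and B = [[0,0,×],[×,0,0]]. Then C(M⁰[G;I,Λ;P]) contains a cycle if and only if at least one of D₃, O_{1×3}, O_{3×1}, O_{2×2}, A, Aᵀ, B, Bᵀ is a ↔-submatrix of the zero-pattern of P. Furthermore: (a) if at least one of D₃, O_{1×3}, O_{3×1}, O_{2×2} is a ↔-submatrix of the zero-pattern of P, then the girth of C(M⁰[G;I,Λ;P]) equals 3; (b) if at least one of A, Aᵀ, B, Bᵀ is a ↔-submatrix of the zero-pattern of P and none of D₃, O_{1×3}, O_{3×1}, O_{2×2} is, then the girth of C(M⁰[G;I,Λ;P]) equals 4. -/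
variable {G : Type*} [Group G] {I Λ : Type*}

/-- Multiplication in the 0-Rees matrix semigroup `M⁰[G;I,Λ;P]` on `(I×G×Λ) ∪ {0}`.
The zero element is `none`, and a zero entry of `P` is encoded as `none`. -/
def reesMul (P : Λ → I → Option G) :
    Option (I × G × Λ) → Option (I × G × Λ) → Option (I × G × Λ)
  | some (i, x, l), some (j, y, m) => (P l j).map fun p => (i, x * p * y, m)
  | _, _ => none

/-- The commuting graph of `M⁰[G;I,Λ;P]`. Its vertex set is `I×G×Λ`, the set of
non-central elements (the center is `{0}`). -/
def commGraph (P : Λ → I → Option G) : SimpleGraph (I × G × Λ) where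
  Adj a b := a ≠ b ∧ reesMul P (some a) (some b) = reesMul P (some b) (some a)
  symm := ⟨fun _ _ h => ⟨h.1.symm, h.2.symm⟩⟩
  loopless := ⟨fun _ h => h.1 rfl⟩

/-- The all-zeros matrix `O_{n×m}` is a ↔-submatrix of the zero-pattern of `P`. -/
def OSub (P : Λ → I → Option G) (n m : ℕ) : Prop :=
  ∃ (Λ' : Finset Λ) (I' : Finset I), Λ'.card = n ∧ I'.card = m ∧
    ∀ l ∈ Λ', ∀ i ∈ I', P l i = none

/-- The matrix `D_k` (the `k×k` matrix with non-zero diagonal entries and zeros elsewhere)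
is a ↔-submatrix of the zero-pattern of `P`. -/
def DSub (P : Λ → I → Option G) (k : ℕ) : Prop :=
  ∃ (f : Fin k → I) (g : Fin k → Λ), Function.Injective f ∧ Function.Injective g ∧
    (∀ j, P (g j) (f j) ≠ none) ∧ ∀ j j', j ≠ j' → P (g j) (f j') = none

/-- The matrix `A = [[0,0,×,×],[×,×,0,0]]` is a ↔-submatrix of the zero-pattern of `P`. -/
def ASub (P : Λ → I → Option G) : Prop :=
  ∃ (i₁ i₂ i₃ i₄ : I) (l₁ l₂ : Λ),
    i₁ ≠ i₂ ∧ i₁ ≠ i₃ ∧ i₁ ≠ i₄ ∧ i₂ ≠ i₃ ∧ i₂ ≠ i₄ ∧ i₃ ≠ i₄ ∧ l₁ ≠ l₂ ∧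
    P l₁ i₁ = none ∧ P l₁ i₂ = none ∧ P l₂ i₃ = none ∧ P l₂ i₄ = none ∧
    P l₁ i₃ ≠ none ∧ P l₁ i₄ ≠ none ∧ P l₂ i₁ ≠ none ∧ P l₂ i₂ ≠ none

/-- The matrix `Aᵀ` is a ↔-submatrix of the zero-pattern of `P`. -/
def ATSub (P : Λ → I → Option G) : Prop :=
  ∃ (l₁ l₂ l₃ l₄ : Λ) (i₁ i₂ : I),
    l₁ ≠ l₂ ∧ l₁ ≠ l₃ ∧ l₁ ≠ l₄ ∧ l₂ ≠ l₃ ∧ l₂ ≠ l₄ ∧ l₃ ≠ l₄ ∧ i₁ ≠ i₂ ∧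
    P l₁ i₁ = none ∧ P l₂ i₁ = none ∧ P l₃ i₂ = none ∧ P l₄ i₂ = none ∧
    P l₃ i₁ ≠ none ∧ P l₄ i₁ ≠ none ∧ P l₁ i₂ ≠ none ∧ P l₂ i₂ ≠ none

/-- The matrix `B = [[0,0,×],[×,0,0]]` is a ↔-submatrix of the zero-pattern of `P`. -/
def BSub (P : Λ → I → Option G) : Prop :=
  ∃ (i₁ i₂ i₃ : I) (l₁ l₂ : Λ),
    i₁ ≠ i₂ ∧ i₁ ≠ i₃ ∧ i₂ ≠ i₃ ∧ l₁ ≠ l₂ ∧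
    P l₁ i₁ = none ∧ P l₁ i₂ = none ∧ P l₂ i₂ = none ∧ P l₂ i₃ = none ∧
    P l₁ i₃ ≠ none ∧ P l₂ i₁ ≠ none

/-- The matrix `Bᵀ` is a ↔-submatrix of the zero-pattern of `P`. -/
def BTSub (P : Λ → I → Option G) : Prop :=
  ∃ (l₁ l₂ l₃ : Λ) (i₁ i₂ : I),
    l₁ ≠ l₂ ∧ l₁ ≠ l₃ ∧ l₂ ≠ l₃ ∧ i₁ ≠ i₂ ∧
    P l₁ i₁ = none ∧ P l₂ i₁ = none ∧ P l₂ i₂ = none ∧ P l₃ i₂ = none ∧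
    P l₃ i₁ ≠ none ∧ P l₁ i₂ ≠ none



lemma commGraph_adj (P : Λ → I → Option G) (htriv : ∀ x : G, x = 1) {i j : I} {x y : G} {l m : Λ} :
    (commGraph P).Adj (i,x,l) (j,y,m) ↔
      ((i,x,l) : I×G×Λ) ≠ (j,y,m) ∧ P l j = none ∧ P m i = none := by
  constructor
  · rintro ⟨hne, heq⟩
    refine ⟨hne, ?_⟩
    simp only [commGraph, reesMul] at heq
    cases hlj : P l j with
    | none =>
      cases hmi : P m i with
      | none => exact ⟨rfl, rfl⟩
      | some q => rw [hlj, hmi] at heq; simp at heq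
    | some p =>
      cases hmi : P m i with
      | none => rw [hlj, hmi] at heq; simp at heq
      | some q =>
        rw [hlj, hmi] at heq
        simp only [Option.map_some, Option.some_inj, Prod.mk.injEq] at heq
        exact absurd (by rw [heq.1, htriv x, htriv y, heq.2.2]) hne
  · rintro ⟨hne, h1, h2⟩
    exact ⟨hne, by simp [reesMul, h1, h2]⟩

open SimpleGraph in
lemma mkCycle3 {V : Type*} {H : SimpleGraph V} {a b c : V} (hab : H.Adj a b) (hbc : H.Adj b c)
    (hca : H.Adj c a) : ∃ w : H.Walk a a, w.IsCycle ∧ w.length = 3 := by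
  refine ⟨.cons hab (.cons hbc (.cons hca .nil)), ?_, rfl⟩
  have h1 := hab.ne
  have h2 := hbc.ne
  have h3 := hca.ne
  simp [Walk.isCycle_def, Walk.isTrail_def, Sym2.eq, Sym2.rel_iff', h1, h2, h3, Ne.symm h3,
    Ne.symm h1, Ne.symm h2]


open SimpleGraph in
lemma mkCycle4 {V : Type*} {H : SimpleGraph V} {a b c d : V} (hab : H.Adj a b) (hbc : H.Adj b c)
    (hcd : H.Adj c d) (hda : H.Adj d a) (hac : a ≠ c) (hbd : b ≠ d) :
    ∃ w : H.Walk a a, w.IsCycle ∧ w.length = 4 := by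
  refine ⟨.cons hab (.cons hbc (.cons hcd (.cons hda .nil))), ?_, rfl⟩
  have h1 := hab.ne
  have h2 := hbc.ne
  have h3 := hcd.ne
  have h4 := hda.ne
  simp [Walk.isCycle_def, Walk.isTrail_def, Sym2.eq, Sym2.rel_iff', h1, h2, h3, h4, hac, hbd,
    Ne.symm h1, Ne.symm h2, Ne.symm h3, Ne.symm h4, Ne.symm hac, Ne.symm hbd]


section Abstract
variable {X Y : Type*} {Z : X → Y → Prop}

/-- From no-2×2-block, no-B-path, no-A: two distinct rows cannot both have two distinct zeros. -/
lemma row2'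
    (hsq : ∀ l l' i i', l ≠ l' → i ≠ i' → Z l i → Z l i' → Z l' i → Z l' i' → False)
    (hbr : ∀ l l' i₁ i₂ i₃, l ≠ l' → i₁ ≠ i₂ → i₁ ≠ i₃ → i₂ ≠ i₃ →
      Z l i₁ → Z l i₂ → Z l' i₂ → Z l' i₃ → False)
    (har : ∀ l l' i₁ i₂ i₃ i₄, l ≠ l' → i₁ ≠ i₂ → i₁ ≠ i₃ → i₁ ≠ i₄ → i₂ ≠ i₃ → i₂ ≠ i₄ →
      i₃ ≠ i₄ → Z l i₁ → Z l i₂ → Z l' i₃ → Z l' i₄ → False)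
    {l l' : X} {i₁ i₂ i₃ i₄ : Y} (hl : l ≠ l') (h12 : i₁ ≠ i₂) (h34 : i₃ ≠ i₄)
    (z1 : Z l i₁) (z2 : Z l i₂) (z3 : Z l' i₃) (z4 : Z l' i₄) : False := by
  by_cases e31 : i₃ = i₁
  · subst e31
    by_cases e42 : i₄ = i₂
    · subst e42; exact hsq l l' i₃ i₄ hl h12 z1 z2 z3 z4
    · exact hbr l l' i₂ i₃ i₄ hl (Ne.symm h12) (fun h => e42 h.symm) h34 z2 z1 z3 z4
  · by_cases e32 : i₃ = i₂
    · subst e32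
      by_cases e41 : i₄ = i₁
      · subst e41; exact hsq l l' i₄ i₃ hl h12 z1 z2 z4 z3
      · exact hbr l l' i₁ i₃ i₄ hl h12 (fun h => e41 h.symm) h34 z1 z2 z3 z4
    · by_cases e41 : i₄ = i₁
      · exact hbr l l' i₂ i₁ i₃ hl (Ne.symm h12) (fun h => e32 h.symm) (fun h => e31 h.symm)
          z2 z1 (e41 ▸ z4) z3
      · by_cases e42 : i₄ = i₂
        · exact hbr l l' i₁ i₂ i₃ hl h12 (fun h => e31 h.symm) (fun h => e32 h.symm)
            z1 z2 (e42 ▸ z4) z3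
        · exact har l l' i₁ i₂ i₃ i₄ hl h12 (fun h => e31 h.symm) (fun h => e41 h.symm)
            (fun h => e32 h.symm) (fun h => e42 h.symm) h34 z1 z2 z3 z4

/-- Triangle auxiliary: case `a₁ = a₂`. -/
lemma tri_aux
    (hc3 : ∀ i l₁ l₂ l₃, l₁ ≠ l₂ → l₁ ≠ l₃ → l₂ ≠ l₃ → Z l₁ i → Z l₂ i → Z l₃ i → False)
    (hsq : ∀ l l' i i', l ≠ l' → i ≠ i' → Z l i → Z l i' → Z l' i → Z l' i' → False)
    {a₁ a₂ a₃ : Y} {c₁ c₂ c₃ : X}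
    (z12 : Z c₁ a₂) (z21 : Z c₂ a₁) (z13 : Z c₁ a₃) (z31 : Z c₃ a₁)
    (z23 : Z c₂ a₃) (z32 : Z c₃ a₂)
    (e12 : a₁ = a₂)
    (hv12 : a₁ = a₂ → c₁ ≠ c₂) (hv13 : a₁ = a₃ → c₁ ≠ c₃) (hv23 : a₂ = a₃ → c₂ ≠ c₃) :
    False := by
  have hc12 : c₁ ≠ c₂ := hv12 e12
  have z11 : Z c₁ a₁ := by rw [e12]; exact z12
  by_cases e13 : a₁ = a₃
  · have hc13 := hv13 e13
    have hc23 := hv23 (e12 ▸ e13)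
    have z31' : Z c₃ a₁ := z31
    exact hc3 a₁ c₁ c₂ c₃ hc12 hc13 hc23 z11 z21 z31'
  · exact hsq c₁ c₂ a₁ a₃ hc12 e13 z11 z13 z21 z23

/-- Triangle lemma: a triangle in the commuting graph forces a pattern
(here: contradiction, with the D₃ escape given as `hd3`). -/
lemma tri
    (hr3 : ∀ l i₁ i₂ i₃, i₁ ≠ i₂ → i₁ ≠ i₃ → i₂ ≠ i₃ → Z l i₁ → Z l i₂ → Z l i₃ → False)
    (hc3 : ∀ i l₁ l₂ l₃, l₁ ≠ l₂ → l₁ ≠ l₃ → l₂ ≠ l₃ → Z l₁ i → Z l₂ i → Z l₃ i → False)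
    (hsq : ∀ l l' i i', l ≠ l' → i ≠ i' → Z l i → Z l i' → Z l' i → Z l' i' → False)
    (hd3 : ∀ (a₁ a₂ a₃ : Y) (c₁ c₂ c₃ : X), a₁ ≠ a₂ → a₁ ≠ a₃ → a₂ ≠ a₃ →
      c₁ ≠ c₂ → c₁ ≠ c₃ → c₂ ≠ c₃ →
      Z c₁ a₂ → Z c₁ a₃ → Z c₂ a₁ → Z c₂ a₃ → Z c₃ a₁ → Z c₃ a₂ →
      ¬ Z c₁ a₁ → ¬ Z c₂ a₂ → ¬ Z c₃ a₃ → False)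
    {a₁ a₂ a₃ : Y} {c₁ c₂ c₃ : X}
    (z12 : Z c₁ a₂) (z21 : Z c₂ a₁) (z13 : Z c₁ a₃) (z31 : Z c₃ a₁)
    (z23 : Z c₂ a₃) (z32 : Z c₃ a₂)
    (hv12 : a₁ = a₂ → c₁ ≠ c₂) (hv13 : a₁ = a₃ → c₁ ≠ c₃) (hv23 : a₂ = a₃ → c₂ ≠ c₃) :
    False := by
  by_cases e12 : a₁ = a₂
  · exact tri_aux hc3 hsq z12 z21 z13 z31 z23 z32 e12 hv12 hv13 hv23
  · by_cases e13 : a₁ = a₃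
    · exact tri_aux hc3 hsq z13 z31 z12 z21 z32 z23 e13 hv13 hv12
        (fun h hc => hv23 h.symm hc.symm)
    · by_cases e23 : a₂ = a₃
      · exact tri_aux hc3 hsq z23 z32 z21 z12 z31 z13 e23 hv23
          (fun h hc => hv12 h.symm hc.symm) (fun h hc => hv13 h.symm hc.symm)
      · -- all `a`s distinct; now the rows
        by_cases f12 : c₁ = c₂
        · exact tri_aux (Z := fun y x => Z x y) hr3
            (fun i i' l l' hi hl zi zl zi' zl' => hsq l l' i i' hl hi zi zi' zl zl')
            z21 z12 z31 z13 z32 z23 f12 (fun _ => e12) (fun _ => e13) (fun _ => e23)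
        · by_cases f13 : c₁ = c₃
          · exact tri_aux (Z := fun y x => Z x y) hr3
              (fun i i' l l' hi hl zi zl zi' zl' => hsq l l' i i' hl hi zi zi' zl zl')
              z31 z13 z21 z12 z23 z32 f13 (fun _ => e13) (fun _ => e12)
              (fun h hc => e23 hc.symm)
          · by_cases f23 : c₂ = c₃
            · exact tri_aux (Z := fun y x => Z x y) hr3
                (fun i i' l l' hi hl zi zl zi' zl' => hsq l l' i i' hl hi zi zi' zl zl')
                z32 z23 z12 z21 z13 z31 f23 (fun _ => e23) (fun h hc => e12 hc.symm)
                (fun h hc => e13 hc.symm)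
            · by_cases g1 : Z c₁ a₁
              · exact hr3 c₁ a₁ a₂ a₃ e12 e13 e23 g1 z12 z13
              · by_cases g2 : Z c₂ a₂
                · exact hr3 c₂ a₁ a₂ a₃ e12 e13 e23 z21 g2 z23
                · by_cases g3 : Z c₃ a₃
                  · exact hr3 c₃ a₁ a₂ a₃ e12 e13 e23 z31 z32 g3
                  · exact hd3 a₁ a₂ a₃ c₁ c₂ c₃ e12 e13 e23 f12 f13 f23
                      z12 z13 z21 z23 z31 z32 g1 g2 g3
end Abstract

section Abstract2
variable {X Y : Type*} {Z : X → Y → Prop}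

/-- Two distinct columns cannot both have two distinct zeros. -/
lemma col2'
    (hsq : ∀ l l' i i', l ≠ l' → i ≠ i' → Z l i → Z l i' → Z l' i → Z l' i' → False)
    (hbc : ∀ i i' l₁ l₂ l₃, i ≠ i' → l₁ ≠ l₂ → l₁ ≠ l₃ → l₂ ≠ l₃ →
      Z l₁ i → Z l₂ i → Z l₂ i' → Z l₃ i' → False)
    (hac : ∀ i i' l₁ l₂ l₃ l₄, i ≠ i' → l₁ ≠ l₂ → l₁ ≠ l₃ → l₁ ≠ l₄ → l₂ ≠ l₃ → l₂ ≠ l₄ →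
      l₃ ≠ l₄ → Z l₁ i → Z l₂ i → Z l₃ i' → Z l₄ i' → False)
    {i i' : Y} {l₁ l₂ l₃ l₄ : X} (hi : i ≠ i') (h12 : l₁ ≠ l₂) (h34 : l₃ ≠ l₄)
    (z1 : Z l₁ i) (z2 : Z l₂ i) (z3 : Z l₃ i') (z4 : Z l₄ i') : False :=
  row2' (Z := fun y x => Z x y)
    (fun a b c d ha hc u v w x => hsq c d a b hc ha u w v x)
    hbc hac hi h12 h34 z1 z2 z3 z4

/-- 4-cycle auxiliary: case `a₁ = a₃`. -/
lemma sq_aux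
    (hc3 : ∀ i l₁ l₂ l₃, l₁ ≠ l₂ → l₁ ≠ l₃ → l₂ ≠ l₃ → Z l₁ i → Z l₂ i → Z l₃ i → False)
    (hsq : ∀ l l' i i', l ≠ l' → i ≠ i' → Z l i → Z l i' → Z l' i → Z l' i' → False)
    (hbc : ∀ i i' l₁ l₂ l₃, i ≠ i' → l₁ ≠ l₂ → l₁ ≠ l₃ → l₂ ≠ l₃ →
      Z l₁ i → Z l₂ i → Z l₂ i' → Z l₃ i' → False)
    (hac : ∀ i i' l₁ l₂ l₃ l₄, i ≠ i' → l₁ ≠ l₂ → l₁ ≠ l₃ → l₁ ≠ l₄ → l₂ ≠ l₃ → l₂ ≠ l₄ →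
      l₃ ≠ l₄ → Z l₁ i → Z l₂ i → Z l₃ i' → Z l₄ i' → False)
    {a₁ a₂ a₃ a₄ : Y} {c₁ c₂ c₃ c₄ : X}
    (z1 : Z c₁ a₂) (z2 : Z c₂ a₁) (z3 : Z c₂ a₃) (z4 : Z c₃ a₂)
    (z5 : Z c₃ a₄) (z6 : Z c₄ a₃) (z7 : Z c₄ a₁) (z8 : Z c₁ a₄)
    (e13 : a₁ = a₃)
    (hv12 : a₁ = a₂ → c₁ ≠ c₂) (hv13 : a₁ = a₃ → c₁ ≠ c₃)
    (hv23 : a₂ = a₃ → c₂ ≠ c₃) (hv24 : a₂ = a₄ → c₂ ≠ c₄) : False := by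
  have hc13 : c₁ ≠ c₃ := hv13 e13
  by_cases e24 : a₂ = a₄
  · have hc24 : c₂ ≠ c₄ := hv24 e24
    by_cases e12 : a₁ = a₂
    · -- all four equal
      have hc12 : c₁ ≠ c₂ := hv12 e12
      have hc23 : c₂ ≠ c₃ := hv23 (e12.symm.trans e13)
      have z1' : Z c₁ a₁ := by rw [e12]; exact z1
      have z4' : Z c₃ a₁ := by rw [e12]; exact z4
      exact hc3 a₁ c₁ c₂ c₃ hc12 hc13 hc23 z1' z2 z4'
    · -- Col2(a₂) rows c₁,c₃ ; Col2(a₁) rows c₂,c₄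
      exact col2' hsq hbc hac (fun h => e12 h.symm) hc13 hc24 z1 z4 z2 z7
  · -- Col2(a₂) rows c₁,c₃ ; Col2(a₄) rows c₃,c₁
    exact col2' hsq hbc hac e24 hc13 (Ne.symm hc13) z1 z4 z5 z8

/-- 4-cycle lemma. -/
lemma sq'
    (hr3 : ∀ l i₁ i₂ i₃, i₁ ≠ i₂ → i₁ ≠ i₃ → i₂ ≠ i₃ → Z l i₁ → Z l i₂ → Z l i₃ → False)
    (hc3 : ∀ i l₁ l₂ l₃, l₁ ≠ l₂ → l₁ ≠ l₃ → l₂ ≠ l₃ → Z l₁ i → Z l₂ i → Z l₃ i → False)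
    (hsq : ∀ l l' i i', l ≠ l' → i ≠ i' → Z l i → Z l i' → Z l' i → Z l' i' → False)
    (hbr : ∀ l l' i₁ i₂ i₃, l ≠ l' → i₁ ≠ i₂ → i₁ ≠ i₃ → i₂ ≠ i₃ →
      Z l i₁ → Z l i₂ → Z l' i₂ → Z l' i₃ → False)
    (hbc : ∀ i i' l₁ l₂ l₃, i ≠ i' → l₁ ≠ l₂ → l₁ ≠ l₃ → l₂ ≠ l₃ →
      Z l₁ i → Z l₂ i → Z l₂ i' → Z l₃ i' → False)
    (har : ∀ l l' i₁ i₂ i₃ i₄, l ≠ l' → i₁ ≠ i₂ → i₁ ≠ i₃ → i₁ ≠ i₄ → i₂ ≠ i₃ → i₂ ≠ i₄ →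
      i₃ ≠ i₄ → Z l i₁ → Z l i₂ → Z l' i₃ → Z l' i₄ → False)
    (hac : ∀ i i' l₁ l₂ l₃ l₄, i ≠ i' → l₁ ≠ l₂ → l₁ ≠ l₃ → l₁ ≠ l₄ → l₂ ≠ l₃ → l₂ ≠ l₄ →
      l₃ ≠ l₄ → Z l₁ i → Z l₂ i → Z l₃ i' → Z l₄ i' → False)
    {a₁ a₂ a₃ a₄ : Y} {c₁ c₂ c₃ c₄ : X}
    (z1 : Z c₁ a₂) (z2 : Z c₂ a₁) (z3 : Z c₂ a₃) (z4 : Z c₃ a₂)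
    (z5 : Z c₃ a₄) (z6 : Z c₄ a₃) (z7 : Z c₄ a₁) (z8 : Z c₁ a₄)
    (hv12 : a₁ = a₂ → c₁ ≠ c₂) (hv13 : a₁ = a₃ → c₁ ≠ c₃) (hv14 : a₁ = a₄ → c₁ ≠ c₄)
    (hv23 : a₂ = a₃ → c₂ ≠ c₃) (hv24 : a₂ = a₄ → c₂ ≠ c₄) (hv34 : a₃ = a₄ → c₃ ≠ c₄) :
    False := by
  have hsqT : ∀ (i i' : Y) (l l' : X), i ≠ i' → l ≠ l' →
      Z l i → Z l' i → Z l i' → Z l' i' → False :=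
    fun a b c d ha hc u v w x => hsq c d a b hc ha u w v x
  by_cases e13 : a₁ = a₃
  · exact sq_aux hc3 hsq hbc hac z1 z2 z3 z4 z5 z6 z7 z8 e13 hv12 hv13 hv23 hv24
  · by_cases e24 : a₂ = a₄
    · exact sq_aux hc3 hsq hbc hac z3 z4 z5 z6 z7 z8 z1 z2 e24 hv23 hv24 hv34
        (fun h hc => hv13 h.symm hc.symm)
    · by_cases f13 : c₁ = c₃
      · exact sq_aux (Z := fun y x => Z x y) hr3 hsqT hbr har
          z2 z1 z4 z3 z6 z5 z8 z7 f13 (fun hc ha => hv12 ha hc) (fun hc ha => hv13 ha hc)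
          (fun hc ha => hv23 ha hc) (fun hc ha => hv24 ha hc)
      · by_cases f24 : c₂ = c₄
        · exact sq_aux (Z := fun y x => Z x y) hr3 hsqT hbr har
            z4 z3 z6 z5 z8 z7 z2 z1 f24 (fun hc ha => hv23 ha hc) (fun hc ha => hv24 ha hc)
            (fun hc ha => hv34 ha hc) (fun hc ha => hv13 ha.symm hc.symm)
        · exact row2' hsq hbr har f13 e24 e24 z1 z8 z4 z5
end Abstract2

section Abstract3
variable {X Y : Type*} {Z : X → Y → Prop}

/-- P₅ auxiliary 1: the case `c₂ = c₃`. -/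
lemma p5_aux1
    (hr3 : ∀ l i₁ i₂ i₃, i₁ ≠ i₂ → i₁ ≠ i₃ → i₂ ≠ i₃ → Z l i₁ → Z l i₂ → Z l i₃ → False)
    (hsq : ∀ l l' i i', l ≠ l' → i ≠ i' → Z l i → Z l i' → Z l' i → Z l' i' → False)
    (hbc : ∀ i i' l₁ l₂ l₃, i ≠ i' → l₁ ≠ l₂ → l₁ ≠ l₃ → l₂ ≠ l₃ →
      Z l₁ i → Z l₂ i → Z l₂ i' → Z l₃ i' → False)
    {a₁ a₂ a₃ a₄ : Y} {c₁ c₂ c₃ c₄ : X}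
    (z1 : Z c₁ a₂) (z2 : Z c₂ a₁) (z3 : Z c₂ a₃) (z4 : Z c₃ a₂)
    (z5 : Z c₃ a₄) (z6 : Z c₄ a₃)
    (e : c₂ = c₃)
    (hv12 : a₁ = a₂ → c₁ ≠ c₂) (hv13 : a₁ = a₃ → c₁ ≠ c₃) (hv23 : a₂ = a₃ → c₂ ≠ c₃)
    (hv24 : a₂ = a₄ → c₂ ≠ c₄) (hv34 : a₃ = a₄ → c₃ ≠ c₄) : False := by
  have e23 : a₂ ≠ a₃ := fun h => hv23 h e
  have z4' : Z c₂ a₂ := by rw [e]; exact z4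
  have z5' : Z c₂ a₄ := by rw [e]; exact z5
  have ha1 : a₁ = a₂ ∨ a₁ = a₃ := by
    by_contra h; push_neg at h; exact hr3 c₂ a₁ a₂ a₃ h.1 h.2 e23 z2 z4' z3
  have ha4 : a₄ = a₂ ∨ a₄ = a₃ := by
    by_contra h; push_neg at h; exact hr3 c₂ a₄ a₂ a₃ h.1 h.2 e23 z5' z4' z3
  have hc12 : c₁ ≠ c₂ := by
    rcases ha1 with h | h
    · exact hv12 h
    · exact fun hc => hv13 h (hc.trans e)
  have hc42 : c₄ ≠ c₂ := by
    rcases ha4 with h | h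
    · exact fun hc => hv24 h.symm hc.symm
    · exact fun hc => hv34 h.symm (hc.trans e).symm
  by_cases f14 : c₁ = c₄
  · have z6' : Z c₁ a₃ := by rw [f14]; exact z6
    exact hsq c₁ c₂ a₂ a₃ hc12 e23 z1 z6' z4' z3
  · exact hbc a₂ a₃ c₁ c₂ c₄ e23 hc12 f14 (Ne.symm hc42) z1 z4' z3 z6

/-- P₅ auxiliary 3. -/
lemma p5_aux3
    (hsq : ∀ l l' i i', l ≠ l' → i ≠ i' → Z l i → Z l i' → Z l' i → Z l' i' → False)
    (hbr : ∀ l l' i₁ i₂ i₃, l ≠ l' → i₁ ≠ i₂ → i₁ ≠ i₃ → i₂ ≠ i₃ →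
      Z l i₁ → Z l i₂ → Z l' i₂ → Z l' i₃ → False)
    (hbc : ∀ i i' l₁ l₂ l₃, i ≠ i' → l₁ ≠ l₂ → l₁ ≠ l₃ → l₂ ≠ l₃ →
      Z l₁ i → Z l₂ i → Z l₂ i' → Z l₃ i' → False)
    (har : ∀ l l' i₁ i₂ i₃ i₄, l ≠ l' → i₁ ≠ i₂ → i₁ ≠ i₃ → i₁ ≠ i₄ → i₂ ≠ i₃ → i₂ ≠ i₄ →
      i₃ ≠ i₄ → Z l i₁ → Z l i₂ → Z l' i₃ → Z l' i₄ → False)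
    (hac : ∀ i i' l₁ l₂ l₃ l₄, i ≠ i' → l₁ ≠ l₂ → l₁ ≠ l₃ → l₁ ≠ l₄ → l₂ ≠ l₃ → l₂ ≠ l₄ →
      l₃ ≠ l₄ → Z l₁ i → Z l₂ i → Z l₃ i' → Z l₄ i' → False)
    {a₁ a₂ a₃ a₄ a₅ : Y} {c₁ c₂ c₃ c₄ c₅ : X}
    (z1 : Z c₁ a₂) (z2 : Z c₂ a₁) (z3 : Z c₂ a₃) (z4 : Z c₃ a₂)
    (z5 : Z c₃ a₄) (z6 : Z c₄ a₃) (z7 : Z c₄ a₅) (z8 : Z c₅ a₄)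
    (h13 : a₁ ≠ a₃) (h23 : a₂ ≠ a₃) (f23 : c₂ ≠ c₃)
    (hv24 : a₂ = a₄ → c₂ ≠ c₄) (hv35 : a₃ = a₅ → c₃ ≠ c₅) : False := by
  by_cases e24 : a₂ = a₄
  · have hc24 : c₂ ≠ c₄ := hv24 e24
    by_cases f13 : c₁ = c₃
    · by_cases f53 : c₅ = c₃
      · have h35 : a₃ ≠ a₅ := fun h => hv35 h f53.symm
        exact row2' hsq hbr har hc24 h13 h35 z2 z3 z6 z7
      · have z8' : Z c₅ a₂ := by rw [e24]; exact z8
        exact col2' hsq hbc hac h23 (fun h => f53 h.symm) hc24 z4 z8' z3 z6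
    · exact col2' hsq hbc hac h23 f13 hc24 z1 z4 z3 z6
  · exact row2' hsq hbr har f23 h13 e24 z2 z3 z4 z5

/-- P₅ auxiliary 2. -/
lemma p5_aux2
    (hc3 : ∀ i l₁ l₂ l₃, l₁ ≠ l₂ → l₁ ≠ l₃ → l₂ ≠ l₃ → Z l₁ i → Z l₂ i → Z l₃ i → False)
    (hsq : ∀ l l' i i', l ≠ l' → i ≠ i' → Z l i → Z l i' → Z l' i → Z l' i' → False)
    (hbr : ∀ l l' i₁ i₂ i₃, l ≠ l' → i₁ ≠ i₂ → i₁ ≠ i₃ → i₂ ≠ i₃ →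
      Z l i₁ → Z l i₂ → Z l' i₂ → Z l' i₃ → False)
    (hbc : ∀ i i' l₁ l₂ l₃, i ≠ i' → l₁ ≠ l₂ → l₁ ≠ l₃ → l₂ ≠ l₃ →
      Z l₁ i → Z l₂ i → Z l₂ i' → Z l₃ i' → False)
    (har : ∀ l l' i₁ i₂ i₃ i₄, l ≠ l' → i₁ ≠ i₂ → i₁ ≠ i₃ → i₁ ≠ i₄ → i₂ ≠ i₃ → i₂ ≠ i₄ →
      i₃ ≠ i₄ → Z l i₁ → Z l i₂ → Z l' i₃ → Z l' i₄ → False)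
    (hac : ∀ i i' l₁ l₂ l₃ l₄, i ≠ i' → l₁ ≠ l₂ → l₁ ≠ l₃ → l₁ ≠ l₄ → l₂ ≠ l₃ → l₂ ≠ l₄ →
      l₃ ≠ l₄ → Z l₁ i → Z l₂ i → Z l₃ i' → Z l₄ i' → False)
    {a₁ a₂ a₃ a₄ a₅ : Y} {c₁ c₂ c₃ c₄ c₅ : X}
    (z1 : Z c₁ a₂) (z2 : Z c₂ a₁) (z3 : Z c₂ a₃) (z4 : Z c₃ a₂)
    (z5 : Z c₃ a₄) (z6 : Z c₄ a₃) (z7 : Z c₄ a₅) (z8 : Z c₅ a₄)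
    (h23 : a₂ ≠ a₃) (h34 : a₃ ≠ a₄) (f23 : c₂ ≠ c₃) (f34 : c₃ ≠ c₄)
    (hv13 : a₁ = a₃ → c₁ ≠ c₃) (hv15 : a₁ = a₅ → c₁ ≠ c₅) (hv24 : a₂ = a₄ → c₂ ≠ c₄)
    (hv35 : a₃ = a₅ → c₃ ≠ c₅) : False := by
  by_cases e13 : a₁ = a₃
  · by_cases e35 : a₃ = a₅
    · have hc13 : c₁ ≠ c₃ := hv13 e13
      have hc35 : c₃ ≠ c₅ := hv35 e35
      have hc15 : c₁ ≠ c₅ := hv15 (e13.trans e35)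
      by_cases e24 : a₂ = a₄
      · have z8' : Z c₅ a₂ := by rw [e24]; exact z8
        exact hc3 a₂ c₁ c₃ c₅ hc13 hc15 hc35 z1 z4 z8'
      · exact col2' hsq hbc hac e24 hc13 hc35 z1 z4 z5 z8
    · exact p5_aux3 hsq hbr hbc har hac z8 z7 z6 z5 z4 z3 z2 z1
        (fun h => e35 h.symm) (Ne.symm h34) (Ne.symm f34)
        (fun h hc => hv24 h.symm hc.symm) (fun h hc => hv13 h.symm hc.symm)
  · exact p5_aux3 hsq hbr hbc har hac z1 z2 z3 z4 z5 z6 z7 z8 e13 h23 f23 hv24 hv35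

/-- P₅ lemma: a path on five distinct vertices forces a pattern (contradiction). -/
lemma p5
    (hr3 : ∀ l i₁ i₂ i₃, i₁ ≠ i₂ → i₁ ≠ i₃ → i₂ ≠ i₃ → Z l i₁ → Z l i₂ → Z l i₃ → False)
    (hc3 : ∀ i l₁ l₂ l₃, l₁ ≠ l₂ → l₁ ≠ l₃ → l₂ ≠ l₃ → Z l₁ i → Z l₂ i → Z l₃ i → False)
    (hsq : ∀ l l' i i', l ≠ l' → i ≠ i' → Z l i → Z l i' → Z l' i → Z l' i' → False)
    (hbr : ∀ l l' i₁ i₂ i₃, l ≠ l' → i₁ ≠ i₂ → i₁ ≠ i₃ → i₂ ≠ i₃ →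
      Z l i₁ → Z l i₂ → Z l' i₂ → Z l' i₃ → False)
    (hbc : ∀ i i' l₁ l₂ l₃, i ≠ i' → l₁ ≠ l₂ → l₁ ≠ l₃ → l₂ ≠ l₃ →
      Z l₁ i → Z l₂ i → Z l₂ i' → Z l₃ i' → False)
    (har : ∀ l l' i₁ i₂ i₃ i₄, l ≠ l' → i₁ ≠ i₂ → i₁ ≠ i₃ → i₁ ≠ i₄ → i₂ ≠ i₃ → i₂ ≠ i₄ →
      i₃ ≠ i₄ → Z l i₁ → Z l i₂ → Z l' i₃ → Z l' i₄ → False)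
    (hac : ∀ i i' l₁ l₂ l₃ l₄, i ≠ i' → l₁ ≠ l₂ → l₁ ≠ l₃ → l₁ ≠ l₄ → l₂ ≠ l₃ → l₂ ≠ l₄ →
      l₃ ≠ l₄ → Z l₁ i → Z l₂ i → Z l₃ i' → Z l₄ i' → False)
    {a₁ a₂ a₃ a₄ a₅ : Y} {c₁ c₂ c₃ c₄ c₅ : X}
    (z1 : Z c₁ a₂) (z2 : Z c₂ a₁) (z3 : Z c₂ a₃) (z4 : Z c₃ a₂)
    (z5 : Z c₃ a₄) (z6 : Z c₄ a₃) (z7 : Z c₄ a₅) (z8 : Z c₅ a₄)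
    (hv12 : a₁ = a₂ → c₁ ≠ c₂) (hv13 : a₁ = a₃ → c₁ ≠ c₃) (hv15 : a₁ = a₅ → c₁ ≠ c₅)
    (hv23 : a₂ = a₃ → c₂ ≠ c₃) (hv24 : a₂ = a₄ → c₂ ≠ c₄) (hv34 : a₃ = a₄ → c₃ ≠ c₄)
    (hv35 : a₃ = a₅ → c₃ ≠ c₅) (hv45 : a₄ = a₅ → c₄ ≠ c₅) : False := by
  have hsqT : ∀ (i i' : Y) (l l' : X), i ≠ i' → l ≠ l' →
      Z l i → Z l' i → Z l i' → Z l' i' → False :=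
    fun a b c d ha hc u v w x => hsq c d a b hc ha u w v x
  by_cases f23 : c₂ = c₃
  · exact p5_aux1 hr3 hsq hbc z1 z2 z3 z4 z5 z6 f23 hv12 hv13 hv23 hv24 hv34
  · by_cases f34 : c₃ = c₄
    · exact p5_aux1 hr3 hsq hbc z8 z7 z6 z5 z4 z3 f34.symm
        (fun h hc => hv45 h.symm hc.symm) (fun h hc => hv35 h.symm hc.symm)
        (fun h hc => hv34 h.symm hc.symm) (fun h hc => hv24 h.symm hc.symm)
        (fun h hc => hv23 h.symm hc.symm)
    · by_cases e23 : a₂ = a₃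
      · exact p5_aux1 (Z := fun y x => Z x y) hc3 hsqT hbr
          z2 z1 z4 z3 z6 z5 e23 (fun hc ha => hv12 ha hc) (fun hc ha => hv13 ha hc)
          (fun hc ha => hv23 ha hc) (fun hc ha => hv24 ha hc) (fun hc ha => hv34 ha hc)
      · by_cases e34 : a₃ = a₄
        · exact p5_aux1 (Z := fun y x => Z x y) hc3 hsqT hbr
            z7 z8 z5 z6 z3 z4 e34.symm
            (fun hc ha => hv45 ha.symm hc.symm) (fun hc ha => hv35 ha.symm hc.symm)
            (fun hc ha => hv34 ha.symm hc.symm) (fun hc ha => hv24 ha.symm hc.symm)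
            (fun hc ha => hv23 ha.symm hc.symm)
        · exact p5_aux2 hc3 hsq hbr hbc har hac z1 z2 z3 z4 z5 z6 z7 z8
            e23 e34 f23 f34 hv13 hv15 hv24 hv35
end Abstract3

section Derive
variable (P : Λ → I → Option G)

lemma hr3_of (h : ¬ OSub P 1 3) : ∀ l i₁ i₂ i₃, i₁ ≠ i₂ → i₁ ≠ i₃ → i₂ ≠ i₃ →
    P l i₁ = none → P l i₂ = none → P l i₃ = none → False := by
  classical
  intro l i₁ i₂ i₃ h12 h13 h23 z1 z2 z3
  refine h ⟨{l}, {i₁, i₂, i₃}, Finset.card_singleton l, ?_, ?_⟩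
  · rw [Finset.card_eq_three]; exact ⟨i₁, i₂, i₃, h12, h13, h23, rfl⟩
  · intro l' hl' i hi
    simp only [Finset.mem_singleton, Finset.mem_insert] at hl' hi
    subst hl'
    rcases hi with rfl | rfl | hi
    · exact z1
    · exact z2
    · subst hi; exact z3

lemma hc3_of (h : ¬ OSub P 3 1) : ∀ i l₁ l₂ l₃, l₁ ≠ l₂ → l₁ ≠ l₃ → l₂ ≠ l₃ →
    P l₁ i = none → P l₂ i = none → P l₃ i = none → False := by
  classical
  intro i l₁ l₂ l₃ h12 h13 h23 z1 z2 z3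
  refine h ⟨{l₁, l₂, l₃}, {i}, ?_, Finset.card_singleton i, ?_⟩
  · rw [Finset.card_eq_three]; exact ⟨l₁, l₂, l₃, h12, h13, h23, rfl⟩
  · intro l' hl' i' hi
    simp only [Finset.mem_singleton, Finset.mem_insert] at hl' hi
    subst hi
    rcases hl' with rfl | rfl | hl'
    · exact z1
    · exact z2
    · subst hl'; exact z3

lemma hsq_of (h : ¬ OSub P 2 2) : ∀ l l' i i', l ≠ l' → i ≠ i' →
    P l i = none → P l i' = none → P l' i = none → P l' i' = none → False := by
  classical
  intro l l' i i' hl hi z1 z2 z3 z4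
  refine h ⟨{l, l'}, {i, i'}, Finset.card_pair hl, Finset.card_pair hi, ?_⟩
  intro m hm j hj
  simp only [Finset.mem_insert, Finset.mem_singleton] at hm hj
  rcases hm with rfl | rfl <;> rcases hj with rfl | rfl <;> assumption

lemma hbr_of (h13 : ¬ OSub P 1 3) (hB : ¬ BSub P) :
    ∀ l l' i₁ i₂ i₃, l ≠ l' → i₁ ≠ i₂ → i₁ ≠ i₃ → i₂ ≠ i₃ →
    P l i₁ = none → P l i₂ = none → P l' i₂ = none → P l' i₃ = none → False := by
  intro l l' i₁ i₂ i₃ hl h12 h13' h23 z1 z2 z3 z4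
  by_cases g1 : P l i₃ = none
  · exact hr3_of P h13 l i₁ i₂ i₃ h12 h13' h23 z1 z2 g1
  · by_cases g2 : P l' i₁ = none
    · exact hr3_of P h13 l' i₁ i₂ i₃ h12 h13' h23 g2 z3 z4
    · exact hB ⟨i₁, i₂, i₃, l, l', h12, h13', h23, hl, z1, z2, z3, z4, g1, g2⟩

lemma hbc_of (h31 : ¬ OSub P 3 1) (hB : ¬ BTSub P) :
    ∀ i i' l₁ l₂ l₃, i ≠ i' → l₁ ≠ l₂ → l₁ ≠ l₃ → l₂ ≠ l₃ →
    P l₁ i = none → P l₂ i = none → P l₂ i' = none → P l₃ i' = none → False := by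
  intro i i' l₁ l₂ l₃ hi h12 h13' h23 z1 z2 z3 z4
  by_cases g1 : P l₃ i = none
  · exact hc3_of P h31 i l₁ l₂ l₃ h12 h13' h23 z1 z2 g1
  · by_cases g2 : P l₁ i' = none
    · exact hc3_of P h31 i' l₁ l₂ l₃ h12 h13' h23 g2 z3 z4
    · exact hB ⟨l₁, l₂, l₃, i, i', h12, h13', h23, hi, z1, z2, z3, z4, g1, g2⟩

lemma har_of (h13 : ¬ OSub P 1 3) (hA : ¬ ASub P) :
    ∀ l l' i₁ i₂ i₃ i₄, l ≠ l' → i₁ ≠ i₂ → i₁ ≠ i₃ → i₁ ≠ i₄ → i₂ ≠ i₃ → i₂ ≠ i₄ → i₃ ≠ i₄ →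
    P l i₁ = none → P l i₂ = none → P l' i₃ = none → P l' i₄ = none → False := by
  intro l l' i₁ i₂ i₃ i₄ hl e12 e13 e14 e23 e24 e34 z1 z2 z3 z4
  by_cases g1 : P l i₃ = none
  · exact hr3_of P h13 l i₁ i₂ i₃ e12 e13 e23 z1 z2 g1
  · by_cases g2 : P l i₄ = none
    · exact hr3_of P h13 l i₁ i₂ i₄ e12 e14 e24 z1 z2 g2
    · by_cases g3 : P l' i₁ = none
      · exact hr3_of P h13 l' i₁ i₃ i₄ e13 e14 e34 g3 z3 z4
      · by_cases g4 : P l' i₂ = none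
        · exact hr3_of P h13 l' i₂ i₃ i₄ e23 e24 e34 g4 z3 z4
        · exact hA ⟨i₁, i₂, i₃, i₄, l, l', e12, e13, e14, e23, e24, e34, hl,
            z1, z2, z3, z4, g1, g2, g3, g4⟩

lemma hac_of (h31 : ¬ OSub P 3 1) (hA : ¬ ATSub P) :
    ∀ i i' l₁ l₂ l₃ l₄, i ≠ i' → l₁ ≠ l₂ → l₁ ≠ l₃ → l₁ ≠ l₄ → l₂ ≠ l₃ → l₂ ≠ l₄ → l₃ ≠ l₄ →
    P l₁ i = none → P l₂ i = none → P l₃ i' = none → P l₄ i' = none → False := by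
  intro i i' l₁ l₂ l₃ l₄ hi e12 e13 e14 e23 e24 e34 z1 z2 z3 z4
  by_cases g1 : P l₃ i = none
  · exact hc3_of P h31 i l₁ l₂ l₃ e12 e13 e23 z1 z2 g1
  · by_cases g2 : P l₄ i = none
    · exact hc3_of P h31 i l₁ l₂ l₄ e12 e14 e24 z1 z2 g2
    · by_cases g3 : P l₁ i' = none
      · exact hc3_of P h31 i' l₁ l₃ l₄ e13 e14 e34 g3 z3 z4
      · by_cases g4 : P l₂ i' = none
        · exact hc3_of P h31 i' l₂ l₃ l₄ e23 e24 e34 g4 z3 z4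
        · exact hA ⟨l₁, l₂, l₃, l₄, i, i', e12, e13, e14, e23, e24, e34, hi,
            z1, z2, z3, z4, g1, g2, g3, g4⟩

lemma hd3_of (hD : ¬ DSub P 3) :
    ∀ (a₁ a₂ a₃ : I) (c₁ c₂ c₃ : Λ), a₁ ≠ a₂ → a₁ ≠ a₃ → a₂ ≠ a₃ →
      c₁ ≠ c₂ → c₁ ≠ c₃ → c₂ ≠ c₃ →
      P c₁ a₂ = none → P c₁ a₃ = none → P c₂ a₁ = none → P c₂ a₃ = none →
      P c₃ a₁ = none → P c₃ a₂ = none →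
      ¬ P c₁ a₁ = none → ¬ P c₂ a₂ = none → ¬ P c₃ a₃ = none → False := by
  intro a₁ a₂ a₃ c₁ c₂ c₃ e12 e13 e23 f12 f13 f23 z12 z13 z21 z23 z31 z32 g1 g2 g3
  refine hD ⟨![a₁, a₂, a₃], ![c₁, c₂, c₃], ?_, ?_, ?_, ?_⟩
  · intro x y hxy; fin_cases x <;> fin_cases y <;> simp_all
  · intro x y hxy; fin_cases x <;> fin_cases y <;> simp_all
  · intro j; fin_cases j <;> assumption
  · intro j j' hjj'; fin_cases j <;> fin_cases j' <;> simp_all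
end Derive

section Graph
variable (P : Λ → I → Option G)

lemma vertex_ne (htriv : ∀ x : G, x = 1) {u v : I × G × Λ} (h : u ≠ v) :
    u.1 = v.1 → u.2.2 ≠ v.2.2 := by
  intro h1 h2
  apply h
  have : u.2.1 = v.2.1 := (htriv _).trans (htriv _).symm
  exact Prod.ext h1 (Prod.ext this h2)

lemma adj_zero (htriv : ∀ x : G, x = 1) {u v : I × G × Λ}
    (h : (commGraph P).Adj u v) :
    P u.2.2 v.1 = none ∧ P v.2.2 u.1 = none ∧ (u.1 = v.1 → u.2.2 ≠ v.2.2) := by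
  obtain ⟨i, x, l⟩ := u
  obtain ⟨j, y, m⟩ := v
  rw [commGraph_adj P htriv] at h
  exact ⟨h.2.1, h.2.2, vertex_ne htriv h.1⟩

/-- No triangles, assuming none of the four "(a)" patterns. -/
lemma noTriangle (htriv : ∀ x : G, x = 1)
    (hD : ¬ DSub P 3) (h13 : ¬ OSub P 1 3) (h31 : ¬ OSub P 3 1) (h22 : ¬ OSub P 2 2) :
    ∀ u v w : I × G × Λ, (commGraph P).Adj u v → (commGraph P).Adj v w →
      (commGraph P).Adj u w → False := by
  intro u v w huv hvw huw
  obtain ⟨z12, z21, hv12⟩ := adj_zero P htriv huv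
  obtain ⟨z23, z32, hv23⟩ := adj_zero P htriv hvw
  obtain ⟨z13, z31, hv13⟩ := adj_zero P htriv huw
  exact tri (hr3_of P h13) (hc3_of P h31) (hsq_of P h22) (hd3_of P hD)
    z12 z21 z13 z31 z23 z32 hv12 hv13 hv23

/-- No 4-cycles, assuming none of the eight patterns. -/
lemma noSquare (htriv : ∀ x : G, x = 1)
    (h13 : ¬ OSub P 1 3) (h31 : ¬ OSub P 3 1) (h22 : ¬ OSub P 2 2)
    (hA : ¬ ASub P) (hAT : ¬ ATSub P) (hB : ¬ BSub P) (hBT : ¬ BTSub P) :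
    ∀ u v w x : I × G × Λ, (commGraph P).Adj u v → (commGraph P).Adj v w →
      (commGraph P).Adj w x → (commGraph P).Adj x u →
      u ≠ w → v ≠ x → False := by
  intro u v w x huv hvw hwx hxu huw hvx
  obtain ⟨z1, z2, hv12⟩ := adj_zero P htriv huv
  obtain ⟨z3, z4, hv23⟩ := adj_zero P htriv hvw
  obtain ⟨z5, z6, hv34⟩ := adj_zero P htriv hwx
  obtain ⟨z7, z8, hv41⟩ := adj_zero P htriv hxu
  exact sq' (hr3_of P h13) (hc3_of P h31) (hsq_of P h22) (hbr_of P h13 hB) (hbc_of P h31 hBT)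
    (har_of P h13 hA) (hac_of P h31 hAT) z1 z2 z3 z4 z5 z6 z7 z8
    hv12 (vertex_ne htriv huw) (fun h hc => hv41 h.symm hc.symm) hv23
    (vertex_ne htriv hvx) hv34

/-- No paths on five distinct vertices, assuming none of the eight patterns. -/
lemma noP5 (htriv : ∀ x : G, x = 1)
    (h13 : ¬ OSub P 1 3) (h31 : ¬ OSub P 3 1) (h22 : ¬ OSub P 2 2)
    (hA : ¬ ASub P) (hAT : ¬ ATSub P) (hB : ¬ BSub P) (hBT : ¬ BTSub P) :
    ∀ u v w x y : I × G × Λ, (commGraph P).Adj u v → (commGraph P).Adj v w →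
      (commGraph P).Adj w x → (commGraph P).Adj x y →
      u ≠ w → u ≠ x → u ≠ y → v ≠ x → v ≠ y → w ≠ y → False := by
  intro u v w x y huv hvw hwx hxy huw hux huy hvx hvy hwy
  obtain ⟨z1, z2, hv12⟩ := adj_zero P htriv huv
  obtain ⟨z3, z4, hv23⟩ := adj_zero P htriv hvw
  obtain ⟨z5, z6, hv34⟩ := adj_zero P htriv hwx
  obtain ⟨z7, z8, hv45⟩ := adj_zero P htriv hxy
  exact p5 (hr3_of P h13) (hc3_of P h31) (hsq_of P h22) (hbr_of P h13 hB) (hbc_of P h31 hBT)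
    (har_of P h13 hA) (hac_of P h31 hAT) z1 z2 z3 z4 z5 z6 z7 z8
    hv12 (vertex_ne htriv huw) (vertex_ne htriv huy) hv23 (vertex_ne htriv hvx)
    hv34 (vertex_ne htriv hwy) hv45
end Graph

section Lists

lemma list_eq4 {α : Type*} {s : List α} (h : s.length = 4) : ∃ a b c d, s = [a, b, c, d] := by
  rcases s with _ | ⟨a, s⟩; · simp at h
  rcases s with _ | ⟨b, s⟩; · simp at h
  rcases s with _ | ⟨c, s⟩; · simp at h
  rcases s with _ | ⟨d, s⟩; · simp at h
  rcases s with _ | ⟨e, s⟩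
  · exact ⟨a, b, c, d, rfl⟩
  · simp at h

lemma list_eq5 {α : Type*} {s : List α} (h : s.length = 5) :
    ∃ a b c d e, s = [a, b, c, d, e] := by
  rcases s with _ | ⟨a, s⟩; · simp at h
  obtain ⟨b, c, d, e, rfl⟩ := list_eq4 (s := s) (by simpa using h)
  exact ⟨a, b, c, d, e, rfl⟩

lemma list_ge6 {α : Type*} {s : List α} (h : 6 ≤ s.length) :
    ∃ a b c d e t, s = a :: b :: c :: d :: e :: t ∧ t ≠ [] := by
  rcases s with _ | ⟨a, s⟩; · simp at h
  rcases s with _ | ⟨b, s⟩; · simp at h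
  rcases s with _ | ⟨c, s⟩; · simp at h
  rcases s with _ | ⟨d, s⟩; · simp at h
  rcases s with _ | ⟨e, s⟩; · simp at h
  rcases s with _ | ⟨f, s⟩; · simp at h
  exact ⟨a, b, c, d, e, f :: s, rfl, by simp⟩
end Lists

open SimpleGraph in
/-- If none of the four "(a)" patterns occurs, there is no cycle of length 3. -/
lemma noCycle3 (P : Λ → I → Option G) (htriv : ∀ x : G, x = 1)
    (hD : ¬ DSub P 3) (h13 : ¬ OSub P 1 3) (h31 : ¬ OSub P 3 1) (h22 : ¬ OSub P 2 2)
    {v : I × G × Λ} (w : (commGraph P).Walk v v) (hw : w.IsCycle) :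
    w.length ≠ 3 := by
  intro hl3
  have hch : List.IsChain (commGraph P).Adj w.support := w.isChain_adj_support
  have hhead : w.support = v :: w.support.tail := w.support_eq_cons
  have hlast : w.support.getLast? = some v := by
    rw [List.getLast?_eq_getLast (by simp), w.getLast_support]
  have hnd : w.support.tail.Nodup := hw.support_nodup
  have hlen : w.support.length = w.length + 1 := w.length_support
  obtain ⟨a, b, c, d, hs⟩ := list_eq4 (s := w.support) (by omega)
  rw [hs] at hch hhead hlast hnd
  simp only [List.isChain_cons_cons, List.isChain_singleton, and_true] at hch
  obtain ⟨h1, h2, h3'⟩ := hch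
  have hav : a = v := by
    simp only [List.tail_cons, List.cons.injEq] at hhead; exact hhead.1
  have hdv : d = v := by simpa using hlast
  simp only [List.tail_cons, List.nodup_cons, List.mem_cons, List.mem_singleton,
    List.not_mem_nil, or_false, List.nodup_nil, and_true, not_or] at hnd
  have hda : d = a := hdv.trans hav.symm
  exact noTriangle P htriv hD h13 h31 h22 a b c h1 h2 ((hda ▸ h3').symm)

open SimpleGraph in
/-- If none of the eight patterns occurs, the commuting graph is acyclic. -/
lemma noCycle (P : Λ → I → Option G) (htriv : ∀ x : G, x = 1)
    (hD : ¬ DSub P 3) (h13 : ¬ OSub P 1 3) (h31 : ¬ OSub P 3 1) (h22 : ¬ OSub P 2 2)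
    (hA : ¬ ASub P) (hAT : ¬ ATSub P) (hB : ¬ BSub P) (hBT : ¬ BTSub P) :
    (commGraph P).IsAcyclic := by
  intro v w hw
  have hch : List.IsChain (commGraph P).Adj w.support := w.isChain_adj_support
  have hhead : w.support = v :: w.support.tail := w.support_eq_cons
  have hlast : w.support.getLast? = some v := by
    rw [List.getLast?_eq_getLast (by simp), w.getLast_support]
  have hnd : w.support.tail.Nodup := hw.support_nodup
  have hlen : w.support.length = w.length + 1 := w.length_support
  have h3 : 3 ≤ w.length := hw.three_le_length
  by_cases hl3 : w.length = 3
  · exact noCycle3 P htriv hD h13 h31 h22 w hw hl3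
  · by_cases hl4 : w.length = 4
    · obtain ⟨a, b, c, d, e, hs⟩ := list_eq5 (s := w.support) (by omega)
      rw [hs] at hch hhead hlast hnd
      simp only [List.isChain_cons_cons, List.isChain_singleton, and_true] at hch
      obtain ⟨h1, h2, h3', h4⟩ := hch
      have hav : a = v := by
        simp only [List.tail_cons, List.cons.injEq] at hhead; exact hhead.1
      have hev : e = v := by simpa using hlast
      have hea : e = a := hev.trans hav.symm
      simp only [List.tail_cons, List.nodup_cons, List.mem_cons, List.mem_singleton,
        List.not_mem_nil, or_false, List.nodup_nil, and_true, not_or] at hnd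
      have hac : a ≠ c := fun h => hnd.2.1.2 (hea.trans h).symm
      have hbd : b ≠ d := hnd.1.2.1
      exact noSquare P htriv h13 h31 h22 hA hAT hB hBT a b c d h1 h2 h3'
        (show (commGraph P).Adj d a from hea ▸ h4) hac hbd
    · have h5 : 5 ≤ w.length := by omega
      obtain ⟨a, b, c, d, e, t, hs, ht⟩ := list_ge6 (s := w.support) (by omega)
      rw [hs] at hch hhead hlast hnd
      have hav : a = v := by
        simp only [List.tail_cons, List.cons.injEq] at hhead; exact hhead.1
      obtain ⟨h1, hch⟩ := (List.isChain_cons_cons).mp hch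
      obtain ⟨h2, hch⟩ := (List.isChain_cons_cons).mp hch
      obtain ⟨h3', hch⟩ := (List.isChain_cons_cons).mp hch
      obtain ⟨h4, hch⟩ := (List.isChain_cons_cons (l := t)).mp hch
      -- v is in t
      have hvt : v ∈ t := by
        have h' : (a :: b :: c :: d :: e :: t).getLast? = t.getLast? := by
          rcases t with _ | ⟨x, t⟩
          · exact absurd rfl ht
          · simp [List.getLast?_cons_cons]
        rw [h'] at hlast
        obtain ⟨hne, heq⟩ := List.mem_getLast?_eq_getLast (l := t) (x := v)
          (by rw [Option.mem_def, hlast])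
        rw [heq]
        exact t.getLast_mem hne
      simp only [List.tail_cons, List.nodup_cons, List.mem_cons, not_or] at hnd
      obtain ⟨⟨hbc, hbd, hbe, hbt⟩, ⟨hcd, hce, hct⟩, ⟨hde, hdt⟩, het, -⟩ := hnd
      have hbv : b ≠ v := fun h => hbt (h ▸ hvt)
      have hcv : c ≠ v := fun h => hct (h ▸ hvt)
      have hdv : d ≠ v := fun h => hdt (h ▸ hvt)
      have hev : e ≠ v := fun h => het (h ▸ hvt)
      exact noP5 P htriv h13 h31 h22 hA hAT hB hBT a b c d e h1 h2 h3' h4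
        (hav ▸ fun h => hcv h.symm) (hav ▸ fun h => hdv h.symm) (hav ▸ fun h => hev h.symm)
        hbd hbe hce

section Constructions
variable (P : Λ → I → Option G)

lemma tne_fst {i j : I} (h : i ≠ j) (x y : G) (l m : Λ) :
    (⟨i, x, l⟩ : I × G × Λ) ≠ ⟨j, y, m⟩ :=
  fun he => h (congrArg Prod.fst he)

lemma tne_lst {l m : Λ} (h : l ≠ m) (x y : G) (i j : I) :
    (⟨i, x, l⟩ : I × G × Λ) ≠ ⟨j, y, m⟩ :=
  fun he => h (congrArg (fun p => p.2.2) he)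

lemma mkAdj (htriv : ∀ x : G, x = 1) {i j : I} {l m : Λ}
    (hne : (⟨i, 1, l⟩ : I × G × Λ) ≠ ⟨j, 1, m⟩) (h1 : P l j = none) (h2 : P m i = none) :
    (commGraph P).Adj (i, 1, l) (j, 1, m) :=
  (commGraph_adj P htriv).mpr ⟨hne, h1, h2⟩

lemma cycle_of_O13 (htriv : ∀ x : G, x = 1) (h : OSub P 1 3) :
    ∃ (a : I × G × Λ) (w : (commGraph P).Walk a a), w.IsCycle ∧ w.length = 3 := by
  classical
  obtain ⟨L, S, hL, hS, hz⟩ := h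
  obtain ⟨l, rfl⟩ := Finset.card_eq_one.mp hL
  obtain ⟨i₁, i₂, i₃, e12, e13, e23, hSe⟩ := Finset.card_eq_three.mp hS
  rw [hSe] at hz
  have z : ∀ i ∈ ({i₁, i₂, i₃} : Finset I), P l i = none := hz l (Finset.mem_singleton_self l)
  have z1 := z i₁ (by simp)
  have z2 := z i₂ (by simp)
  have z3 := z i₃ (by simp)
  obtain ⟨w, hw, hlen⟩ := mkCycle3 (mkAdj P htriv (tne_fst e12 _ _ _ _) z2 z1)
    (mkAdj P htriv (tne_fst e23 _ _ _ _) z3 z2)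
    (mkAdj P htriv (tne_fst (Ne.symm e13) _ _ _ _) z1 z3)
  exact ⟨_, w, hw, hlen⟩

lemma cycle_of_O31 (htriv : ∀ x : G, x = 1) (h : OSub P 3 1) :
    ∃ (a : I × G × Λ) (w : (commGraph P).Walk a a), w.IsCycle ∧ w.length = 3 := by
  classical
  obtain ⟨S, T, hS, hT, hz⟩ := h
  obtain ⟨i, rfl⟩ := Finset.card_eq_one.mp hT
  obtain ⟨l₁, l₂, l₃, e12, e13, e23, hSe⟩ := Finset.card_eq_three.mp hS
  rw [hSe] at hz
  have z : ∀ l ∈ ({l₁, l₂, l₃} : Finset Λ), P l i = none :=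
    fun l hl => hz l hl i (Finset.mem_singleton_self i)
  have z1 := z l₁ (by simp)
  have z2 := z l₂ (by simp)
  have z3 := z l₃ (by simp)
  obtain ⟨w, hw, hlen⟩ := mkCycle3 (mkAdj P htriv (tne_lst e12 _ _ _ _) z1 z2)
    (mkAdj P htriv (tne_lst e23 _ _ _ _) z2 z3)
    (mkAdj P htriv (tne_lst (Ne.symm e13) _ _ _ _) z3 z1)
  exact ⟨_, w, hw, hlen⟩

lemma cycle_of_O22 (htriv : ∀ x : G, x = 1) (h : OSub P 2 2) :
    ∃ (a : I × G × Λ) (w : (commGraph P).Walk a a), w.IsCycle ∧ w.length = 3 := by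
  classical
  obtain ⟨S, T, hS, hT, hz⟩ := h
  obtain ⟨l₁, l₂, hl, hSe⟩ := Finset.card_eq_two.mp hS
  obtain ⟨i₁, i₂, hi, hTe⟩ := Finset.card_eq_two.mp hT
  rw [hSe, hTe] at hz
  have z11 := hz l₁ (by simp) i₁ (by simp)
  have z12 := hz l₁ (by simp) i₂ (by simp)
  have z21 := hz l₂ (by simp) i₁ (by simp)
  have z22 := hz l₂ (by simp) i₂ (by simp)
  obtain ⟨w, hw, hlen⟩ := mkCycle3 (mkAdj P htriv (tne_fst hi _ _ _ _) z12 z11)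
    (mkAdj P htriv (tne_fst (Ne.symm hi) _ _ _ _) z11 z22)
    (mkAdj P htriv (tne_lst (Ne.symm hl) _ _ _ _) z21 z11)
  exact ⟨_, w, hw, hlen⟩

lemma cycle_of_D3 (htriv : ∀ x : G, x = 1) (h : DSub P 3) :
    ∃ (a : I × G × Λ) (w : (commGraph P).Walk a a), w.IsCycle ∧ w.length = 3 := by
  obtain ⟨f, g, hf, hg, _, hz⟩ := h
  have e01 : (0 : Fin 3) ≠ 1 := by decide
  have e02 : (0 : Fin 3) ≠ 2 := by decide
  have e12 : (1 : Fin 3) ≠ 2 := by decide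
  obtain ⟨w, hw, hlen⟩ := mkCycle3
    (mkAdj P htriv (tne_fst (fun he => e01 (hf he)) _ _ _ _) (hz 0 1 e01) (hz 1 0 (Ne.symm e01)))
    (mkAdj P htriv (tne_fst (fun he => e12 (hf he)) _ _ _ _) (hz 1 2 e12) (hz 2 1 (Ne.symm e12)))
    (mkAdj P htriv (tne_fst (fun he => e02 (hf he).symm) _ _ _ _) (hz 2 0 (Ne.symm e02))
      (hz 0 2 e02))
  exact ⟨_, w, hw, hlen⟩

lemma cycle_of_A (htriv : ∀ x : G, x = 1) (h : ASub P) :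
    ∃ (a : I × G × Λ) (w : (commGraph P).Walk a a), w.IsCycle ∧ w.length = 4 := by
  obtain ⟨i₁, i₂, i₃, i₄, l₁, l₂, e12, e13, e14, e23, e24, e34, hl, z1, z2, z3, z4, -⟩ := h
  obtain ⟨w, hw, hlen⟩ := mkCycle4
    (mkAdj P htriv (tne_fst e13 _ _ _ _) z3 z1)
    (mkAdj P htriv (tne_fst (Ne.symm e23) _ _ _ _) z2 z3)
    (mkAdj P htriv (tne_fst e24 _ _ _ _) z4 z2)
    (mkAdj P htriv (tne_fst (Ne.symm e14) _ _ _ _) z1 z4)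
    (tne_fst e12 1 1 l₂ l₂) (tne_fst e34 1 1 l₁ l₁)
  exact ⟨_, w, hw, hlen⟩

lemma cycle_of_AT (htriv : ∀ x : G, x = 1) (h : ATSub P) :
    ∃ (a : I × G × Λ) (w : (commGraph P).Walk a a), w.IsCycle ∧ w.length = 4 := by
  obtain ⟨l₁, l₂, l₃, l₄, i₁, i₂, e12, e13, e14, e23, e24, e34, hi, z1, z2, z3, z4, -⟩ := h
  obtain ⟨w, hw, hlen⟩ := mkCycle4
    (mkAdj P htriv (tne_fst (Ne.symm hi) _ _ _ _) z1 z3)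
    (mkAdj P htriv (tne_fst hi _ _ _ _) z3 z2)
    (mkAdj P htriv (tne_fst (Ne.symm hi) _ _ _ _) z2 z4)
    (mkAdj P htriv (tne_fst hi _ _ _ _) z4 z1)
    (tne_lst e12 1 1 i₂ i₂) (tne_lst e34 1 1 i₁ i₁)
  exact ⟨_, w, hw, hlen⟩

lemma cycle_of_B (htriv : ∀ x : G, x = 1) (h : BSub P) :
    ∃ (a : I × G × Λ) (w : (commGraph P).Walk a a), w.IsCycle ∧ w.length = 4 := by
  obtain ⟨i₁, i₂, i₃, l₁, l₂, e12, e13, e23, hl, z1, z2, z3, z4, -⟩ := h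
  obtain ⟨w, hw, hlen⟩ := mkCycle4
    (mkAdj P htriv (tne_lst hl _ _ _ _) z2 z3)
    (mkAdj P htriv (tne_fst e23 _ _ _ _) z4 z2)
    (mkAdj P htriv (tne_fst (Ne.symm e13) _ _ _ _) z1 z4)
    (mkAdj P htriv (tne_fst e12 _ _ _ _) z3 z1)
    (tne_fst e23 1 1 l₁ l₁) (tne_fst (Ne.symm e12) 1 1 l₂ l₂)
  exact ⟨_, w, hw, hlen⟩

lemma cycle_of_BT (htriv : ∀ x : G, x = 1) (h : BTSub P) :
    ∃ (a : I × G × Λ) (w : (commGraph P).Walk a a), w.IsCycle ∧ w.length = 4 := by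
  obtain ⟨l₁, l₂, l₃, i₁, i₂, e12, e13, e23, hi, z1, z2, z3, z4, -⟩ := h
  obtain ⟨w, hw, hlen⟩ := mkCycle4
    (mkAdj P htriv (tne_fst hi _ _ _ _) z3 z2)
    (mkAdj P htriv (tne_fst (Ne.symm hi) _ _ _ _) z2 z4)
    (mkAdj P htriv (tne_fst hi _ _ _ _) z4 z1)
    (mkAdj P htriv (tne_fst (Ne.symm hi) _ _ _ _) z1 z3)
    (tne_lst e23 1 1 i₁ i₁) (tne_lst (Ne.symm e12) 1 1 i₂ i₂)
  exact ⟨_, w, hw, hlen⟩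
end Constructions

open SimpleGraph in
lemma egirth_le_of_cycle {V : Type*} {H : SimpleGraph V} {a : V} {w : H.Walk a a}
    (hw : w.IsCycle) : H.egirth ≤ (w.length : ℕ∞) := by
  rw [SimpleGraph.egirth]
  exact iInf_le_of_le a (iInf_le_of_le w (iInf_le_of_le hw le_rfl))

open SimpleGraph in
theorem stmt_17' [Fintype I] [Fintype Λ] (P : Λ → I → Option G)
    (htriv : ∀ x : G, x = 1)
    (hrow : ∀ l : Λ, ∃ i : I, P l i ≠ none)
    (hcol : ∀ i : I, ∃ l : Λ, P l i ≠ none)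
    (hzero : ∃ (i : I) (l : Λ), P l i = none) :
    (¬ (commGraph P).IsAcyclic ↔
      (DSub P 3 ∨ OSub P 1 3 ∨ OSub P 3 1 ∨ OSub P 2 2 ∨
        ASub P ∨ ATSub P ∨ BSub P ∨ BTSub P)) ∧
    ((DSub P 3 ∨ OSub P 1 3 ∨ OSub P 3 1 ∨ OSub P 2 2) →
      (commGraph P).girth = 3) ∧
    ((ASub P ∨ ATSub P ∨ BSub P ∨ BTSub P) →
      ¬ DSub P 3 → ¬ OSub P 1 3 → ¬ OSub P 3 1 → ¬ OSub P 2 2 →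
      (commGraph P).girth = 4) := by
  refine ⟨⟨?_, ?_⟩, ?_, ?_⟩
  · intro hnac
    by_contra hpat
    push_neg at hpat
    obtain ⟨h1, h2, h3, h4, h5, h6, h7, h8⟩ := hpat
    exact hnac (noCycle P htriv h1 h2 h3 h4 h5 h6 h7 h8)
  · rintro (h | h | h | h | h | h | h | h) hac
    · obtain ⟨a, w, hw, -⟩ := cycle_of_D3 P htriv h; exact hac w hw
    · obtain ⟨a, w, hw, -⟩ := cycle_of_O13 P htriv h; exact hac w hw
    · obtain ⟨a, w, hw, -⟩ := cycle_of_O31 P htriv h; exact hac w hw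
    · obtain ⟨a, w, hw, -⟩ := cycle_of_O22 P htriv h; exact hac w hw
    · obtain ⟨a, w, hw, -⟩ := cycle_of_A P htriv h; exact hac w hw
    · obtain ⟨a, w, hw, -⟩ := cycle_of_AT P htriv h; exact hac w hw
    · obtain ⟨a, w, hw, -⟩ := cycle_of_B P htriv h; exact hac w hw
    · obtain ⟨a, w, hw, -⟩ := cycle_of_BT P htriv h; exact hac w hw
  · intro hpat
    have hcyc : ∃ (a : I × G × Λ) (w : (commGraph P).Walk a a), w.IsCycle ∧ w.length = 3 := by
      rcases hpat with h | h | h | h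
      · exact cycle_of_D3 P htriv h
      · exact cycle_of_O13 P htriv h
      · exact cycle_of_O31 P htriv h
      · exact cycle_of_O22 P htriv h
    obtain ⟨a, w, hw, hlen⟩ := hcyc
    have hle : (commGraph P).egirth ≤ 3 := by
      have := egirth_le_of_cycle hw
      rwa [hlen, Nat.cast_ofNat] at this
    have heg : (commGraph P).egirth = 3 := le_antisymm hle three_le_egirth
    simp [SimpleGraph.girth, heg]
  · intro hpat hD h13 h31 h22
    have hcyc : ∃ (a : I × G × Λ) (w : (commGraph P).Walk a a), w.IsCycle ∧ w.length = 4 := by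
      rcases hpat with h | h | h | h
      · exact cycle_of_A P htriv h
      · exact cycle_of_AT P htriv h
      · exact cycle_of_B P htriv h
      · exact cycle_of_BT P htriv h
    obtain ⟨a, w, hw, hlen⟩ := hcyc
    have hle : (commGraph P).egirth ≤ 4 := by
      have := egirth_le_of_cycle hw
      rwa [hlen, Nat.cast_ofNat] at this
    have hge : (4 : ℕ∞) ≤ (commGraph P).egirth := by
      rw [le_egirth]
      intro a' w' hw'
      have h3l : 3 ≤ w'.length := hw'.three_le_length
      have hne3 : w'.length ≠ 3 := noCycle3 P htriv hD h13 h31 h22 w' hw'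
      have : 4 ≤ w'.length := by omega
      exact_mod_cast this
    have heg : (commGraph P).egirth = 4 := le_antisymm hle hge
    simp [SimpleGraph.girth, heg]

/-- For trivial `G`: `C(M⁰[G;I,Λ;P])` contains a cycle iff at least one of
`D₃, O_{1×3}, O_{3×1}, O_{2×2}, A, Aᵀ, B, Bᵀ` is a ↔-submatrix of the zero-pattern of `P`.
Moreover (a) if one of `D₃, O_{1×3}, O_{3×1}, O_{2×2}` is such a submatrix, the girth is `3`;
(b) if one of `A, Aᵀ, B, Bᵀ` is and none of `D₃, O_{1×3}, O_{3×1}, O_{2×2}` is, the girth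
is `4`. -/
theorem stmt_17 [Fintype I] [Fintype Λ] (P : Λ → I → Option G)
    (htriv : ∀ x : G, x = 1)
    (hrow : ∀ l : Λ, ∃ i : I, P l i ≠ none)
    (hcol : ∀ i : I, ∃ l : Λ, P l i ≠ none)
    (hzero : ∃ (i : I) (l : Λ), P l i = none) :
    (¬ (commGraph P).IsAcyclic ↔
      (DSub P 3 ∨ OSub P 1 3 ∨ OSub P 3 1 ∨ OSub P 2 2 ∨
        ASub P ∨ ATSub P ∨ BSub P ∨ BTSub P)) ∧
    ((DSub P 3 ∨ OSub P 1 3 ∨ OSub P 3 1 ∨ OSub P 2 2) →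
      (commGraph P).girth = 3) ∧
    ((ASub P ∨ ATSub P ∨ BSub P ∨ BTSub P) →
      ¬ DSub P 3 → ¬ OSub P 1 3 → ¬ OSub P 3 1 → ¬ OSub P 2 2 →
      (commGraph P).girth = 4) := stmt_17' P htriv hrow hcol hzero
end

section
/- Let G be a finite group, I and Λ finite index sets, and P a regular Λ×I matrix with entries in G⁰ containing at least one zero entry. If the commuting graph C(M⁰[G;I,Λ;P]) is connected and z is the number of zero entries of P, then the chromatic number of C(M⁰[G;I,Λ;P]) is at most z·|G|. -/
variable {G : Type*} [Group G] {I Λ : Type*}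

/-- If `C(M⁰[G;I,Λ;P])` is connected and `z` is the number of zero entries of `P`, then
the chromatic number of `C(M⁰[G;I,Λ;P])` is at most `z·|G|`. -/
theorem stmt_18 [Fintype G] [Fintype I] [Fintype Λ] (P : Λ → I → Option G)
    (hrow : ∀ l : Λ, ∃ i : I, P l i ≠ none)
    (hcol : ∀ i : I, ∃ l : Λ, P l i ≠ none)
    (hzero : ∃ (i : I) (l : Λ), P l i = none)
    (hconn : (commGraph P).Connected) :
    (commGraph P).chromaticNumber ≤
      ((Nat.card {q : Λ × I // P q.1 q.2 = none} * Fintype.card G : ℕ) : ℕ∞) := by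
  classical
  obtain ⟨i₀, l₀, hz₀⟩ := hzero
  let Z := {q : Λ × I // P q.1 q.2 = none}
  let z₀ : Z := ⟨(l₀, i₀), hz₀⟩
  let σ : I × G × Λ → Z := fun v =>
    if h : P v.2.2 v.1 = none then ⟨(v.2.2, v.1), h⟩
    else if h2 : ∃ j, P v.2.2 j = none then ⟨(v.2.2, h2.choose), h2.choose_spec⟩
    else z₀
  have hσ1 : ∀ v : I × G × Λ, (∃ j, P v.2.2 j = none) → ((σ v).1).1 = v.2.2 := by
    intro v hv
    by_cases h : P v.2.2 v.1 = none
    · simp only [σ, dif_pos h]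
    · simp only [σ, dif_neg h, dif_pos hv]
  have hσ2 : ∀ v : I × G × Λ, (h : P v.2.2 v.1 = none) → σ v = ⟨(v.2.2, v.1), h⟩ := by
    intro v h
    simp only [σ, dif_pos h]
  let c : (commGraph P).Coloring (Z × G) := SimpleGraph.Coloring.mk
    (fun v => (σ v, v.2.1))
    (by
      rintro ⟨i, x, l⟩ ⟨j, y, m⟩ ⟨hne, hcomm⟩ hc
      have hσeq : σ (i, x, l) = σ (j, y, m) := congrArg Prod.fst hc
      have hxy : x = y := congrArg Prod.snd hc
      simp only [reesMul] at hcomm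
      rcases hPlj : P l j with _ | p <;> rcases hPmi : P m i with _ | q <;>
          rw [hPlj, hPmi] at hcomm
      · -- both products zero
        have h1 : ((σ (i, x, l)).1).1 = l := hσ1 _ ⟨j, hPlj⟩
        have h2 : ((σ (j, y, m)).1).1 = m := hσ1 _ ⟨i, hPmi⟩
        have hlm : l = m := by rw [← h1, ← h2, hσeq]
        subst hlm
        have hPli : P l i = none := hPmi
        have e1 : σ (i, x, l) = ⟨(l, i), hPli⟩ := hσ2 (i, x, l) hPli
        have e2 : σ (j, y, l) = ⟨(l, j), hPlj⟩ := hσ2 (j, y, l) hPlj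
        have hij : i = j := by
          have := e1 ▸ e2 ▸ hσeq
          exact congrArg (fun q : Z => (q.1).2) this
        exact hne (by rw [hij, hxy])
      · simp at hcomm
      · simp at hcomm
      · -- both products nonzero: forces i = j, l = m
        simp only [Option.map_some, Option.some.injEq, Prod.mk.injEq] at hcomm
        exact hne (by rw [hcomm.1, hxy, hcomm.2.2]))
  have hcol' : (commGraph P).Colorable (Fintype.card (Z × G)) := c.colorable
  have := hcol'.chromaticNumber_le
  rw [Fintype.card_prod] at this
  have hcard : Nat.card Z = Fintype.card Z := Nat.card_eq_fintype_card
  calc (commGraph P).chromaticNumber ≤ ((Fintype.card Z * Fintype.card G : ℕ) : ℕ∞) := by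
        exact_mod_cast this
    _ = _ := by rw [hcard]
end

section
/- Let G be a finite group, I and Λ finite index sets, and P a regular Λ×I matrix with entries in G⁰ containing at least one zero entry. Then the commuting graph C(M⁰[G;I,Λ;P]) contains a left path if and only if at least one of the following holds: (1) |G| > 1; (2) O_{1×2} is a ↔-submatrix of the zero-pattern of P; (3) O_{2×1} is a ↔-submatrix of the zero-pattern of P. Furthermore, if C(M⁰[G;I,Λ;P]) contains a left path, then the knit degree of M⁰[G;I,Λ;P] equals 1. -/
variable {G : Type*} [Group G] {I Λ : Type*}

/-- A walk `w` from `u` to `v` in `C(M⁰[G;I,Λ;P])` is a left path if it is a path, `u ≠ v`,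
and `u·x = v·x` in `M⁰[G;I,Λ;P]` for every vertex `x` of the walk. -/
def IsLeftPath (P : Λ → I → Option G) {u v : I × G × Λ} (w : (commGraph P).Walk u v) :
    Prop :=
  w.IsPath ∧ u ≠ v ∧
    ∀ x ∈ w.support, reesMul P (some u) (some x) = reesMul P (some v) (some x)

lemma reesMul_some (P : Λ → I → Option G) (i j : I) (x y : G) (l m : Λ) :
    reesMul P (some (i, x, l)) (some (j, y, m)) =
      (P l j).map fun p => (i, x * p * y, m) := rfl

/-- If all four products are zero, we get a left path of length 1. -/
lemma build_left_path (P : Λ → I → Option G) (u v : I × G × Λ) (huv : u ≠ v)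
    (h1 : reesMul P (some u) (some u) = none)
    (h2 : reesMul P (some u) (some v) = none)
    (h3 : reesMul P (some v) (some u) = none)
    (h4 : reesMul P (some v) (some v) = none) :
    ∃ w : (commGraph P).Walk u v, IsLeftPath P w ∧ w.length = 1 := by
  have hadj : (commGraph P).Adj u v := ⟨huv, h2.trans h3.symm⟩
  refine ⟨SimpleGraph.Walk.cons hadj SimpleGraph.Walk.nil, ⟨?_, huv, ?_⟩, rfl⟩
  · simp [huv]
  · intro x hx
    simp only [SimpleGraph.Walk.support_cons, SimpleGraph.Walk.support_nil,
      List.mem_cons, List.mem_singleton] at hx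
    rcases hx with rfl | rfl | h
    · rw [h1, h3]
    · rw [h2, h4]
    · simp at h

lemma exists_len_one [Fintype G] (P : Λ → I → Option G)
    (hzero : ∃ (i : I) (l : Λ), P l i = none)
    (h : 1 < Fintype.card G ∨ OSub P 1 2 ∨ OSub P 2 1) :
    ∃ (u v : I × G × Λ) (w : (commGraph P).Walk u v),
      IsLeftPath P w ∧ w.length = 1 := by
  rcases h with hG | hO | hO
  · obtain ⟨i, l, hil⟩ := hzero
    obtain ⟨a, b, hab⟩ := Fintype.one_lt_card_iff.mp hG
    refine ⟨(i, a, l), (i, b, l), ?_⟩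
    apply build_left_path <;>
      simp [reesMul_some, hil, Prod.ext_iff, hab]
  · obtain ⟨Λ', I', hΛ, hI, hP⟩ := hO
    obtain ⟨l, rfl⟩ := Finset.card_eq_one.mp hΛ
    obtain ⟨i, hi, j, hj, hij⟩ := Finset.one_lt_card.mp (by omega : 1 < I'.card)
    have hli : P l i = none := hP l (Finset.mem_singleton_self l) i hi
    have hlj : P l j = none := hP l (Finset.mem_singleton_self l) j hj
    refine ⟨(i, 1, l), (j, 1, l), ?_⟩
    apply build_left_path <;>
      simp [reesMul_some, hli, hlj, Prod.ext_iff, hij]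
  · obtain ⟨Λ', I', hΛ, hI, hP⟩ := hO
    obtain ⟨i, rfl⟩ := Finset.card_eq_one.mp hI
    obtain ⟨l, hl, m, hm, hlm⟩ := Finset.one_lt_card.mp (by omega : 1 < Λ'.card)
    have hli : P l i = none := hP l hl i (Finset.mem_singleton_self i)
    have hmi : P m i = none := hP m hm i (Finset.mem_singleton_self i)
    refine ⟨(i, 1, l), (i, 1, m), ?_⟩
    apply build_left_path <;>
      simp [reesMul_some, hli, hmi, Prod.ext_iff, hlm]

lemma conv [Fintype G] (P : Λ → I → Option G)
    (h1 : ¬ 1 < Fintype.card G) (h2 : ¬ OSub P 1 2) (h3 : ¬ OSub P 2 1)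
    (u v : I × G × Λ) (w : (commGraph P).Walk u v) (hw : IsLeftPath P w) :
    False := by
  classical
  have hsub : Subsingleton G :=
    Fintype.card_le_one_iff_subsingleton.mp (not_lt.mp h1)
  have hrowl : ∀ (l : Λ) (i j : I), P l i = none → P l j = none → i = j := by
    intro l i j hi hj
    by_contra hij
    refine h2 ⟨{l}, {i, j}, Finset.card_singleton l, Finset.card_pair hij, ?_⟩
    intro l' hl' i' hi'
    simp only [Finset.mem_singleton] at hl'
    simp only [Finset.mem_insert, Finset.mem_singleton] at hi'
    subst hl'
    rcases hi' with rfl | rfl <;> assumption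
  have hcoll : ∀ (l m : Λ) (i : I), P l i = none → P m i = none → l = m := by
    intro l m i hl hm
    by_contra hlm
    refine h3 ⟨{l, m}, {i}, Finset.card_pair hlm, Finset.card_singleton i, ?_⟩
    intro l' hl' i' hi'
    simp only [Finset.mem_singleton] at hi'
    simp only [Finset.mem_insert, Finset.mem_singleton] at hl'
    subst hi'
    rcases hl' with rfl | rfl <;> assumption
  obtain ⟨i, x, l⟩ := u
  obtain ⟨j, y, m⟩ := v
  obtain ⟨hpath, hne, hcomm⟩ := hw
  obtain rfl : x = y := Subsingleton.elim x y
  cases w with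
  | nil => exact hne rfl
  | @cons _ b _ h w' =>
    obtain ⟨k, z, n⟩ := b
    obtain rfl : x = z := Subsingleton.elim x z
    have hb : (k, x, n) ∈ (SimpleGraph.Walk.cons h w').support := by
      simp only [SimpleGraph.Walk.support_cons, List.mem_cons]
      exact Or.inr w'.start_mem_support
    have hcu := hcomm (i, x, l) ((SimpleGraph.Walk.cons h w').start_mem_support)
    have hcb := hcomm (k, x, n) hb
    have hadj := h.2
    simp only [reesMul_some] at hcu hcb hadj
    -- case analysis on P l i and P m i
    cases hli : P l i with
    | none =>
      cases hmi : P m i with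
      | none =>
        -- case B: l = m, i ≠ j, P l i = none
        have hlme : l = m := hcoll l m i hli hmi
        subst hlme
        have hij : i ≠ j := by
          intro hij; subst hij; exact hne rfl
        -- adjacency
        cases hlk : P l k with
        | none =>
          cases hni : P n i with
          | none =>
            have hk : k = i := hrowl l k i hlk hli
            have hn : n = l := hcoll n l i hni hli
            exact h.1 (by simp [hk, hn])
          | some q => simp [hlk, hni] at hadj
        | some p =>
          cases hni : P n i with
          | none => simp [hlk, hni] at hadj
          | some q =>
            simp only [hlk, hni, Option.map_some, Option.some.injEq,
              Prod.mk.injEq] at hadj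
            exact h.1 (by simp [hadj.1, hadj.2.2])
      | some q => simp [hli, hmi] at hcu
    | some p =>
      cases hmi : P m i with
      | none => simp [hli, hmi] at hcu
      | some q =>
        simp only [hli, hmi, Option.map_some, Option.some.injEq,
          Prod.mk.injEq] at hcu
        obtain ⟨hije, -⟩ := hcu
        subst hije
        have hlm : l ≠ m := by
          intro hlm; subst hlm; exact hne rfl
        -- case A: examine adjacency with b
        cases hlk : P l k with
        | none =>
          cases hmk : P m k with
          | none => exact hlm (hcoll l m k hlk hmk)
          | some q' => simp [hlk, hmk] at hcb
        | some p' =>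
          cases hni : P n i with
          | none => simp [hlk, hni] at hadj
          | some q' =>
            simp only [hlk, hni, Option.map_some, Option.some.injEq,
              Prod.mk.injEq] at hadj
            exact h.1 (by simp [hadj.1, hadj.2.2])

/-- `C(M⁰[G;I,Λ;P])` contains a left path iff `|G| > 1`, or `O_{1×2}`, or `O_{2×1}` is a
↔-submatrix of the zero-pattern of `P`; and in that case, the knit degree of
`M⁰[G;I,Λ;P]` (the length of a shortest left path) equals `1`. -/
theorem stmt_19 [Fintype G] [Fintype I] [Fintype Λ] (P : Λ → I → Option G)
    (hrow : ∀ l : Λ, ∃ i : I, P l i ≠ none)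
    (hcol : ∀ i : I, ∃ l : Λ, P l i ≠ none)
    (hzero : ∃ (i : I) (l : Λ), P l i = none) :
    ((∃ (u v : I × G × Λ) (w : (commGraph P).Walk u v), IsLeftPath P w) ↔
      (1 < Fintype.card G ∨ OSub P 1 2 ∨ OSub P 2 1)) ∧
    ((∃ (u v : I × G × Λ) (w : (commGraph P).Walk u v), IsLeftPath P w) →
      sInf {n : ℕ | ∃ (u v : I × G × Λ) (w : (commGraph P).Walk u v),
        IsLeftPath P w ∧ w.length = n} = 1) := by
  have hiff : (∃ (u v : I × G × Λ) (w : (commGraph P).Walk u v), IsLeftPath P w) ↔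
      (1 < Fintype.card G ∨ OSub P 1 2 ∨ OSub P 2 1) := by
    constructor
    · rintro ⟨u, v, w, hw⟩
      by_contra hc
      push_neg at hc
      exact conv P (not_lt.mpr hc.1) hc.2.1 hc.2.2 u v w hw
    · intro h
      obtain ⟨u, v, w, hw, -⟩ := exists_len_one P hzero h
      exact ⟨u, v, w, hw⟩
  refine ⟨hiff, ?_⟩
  intro hex
  obtain ⟨u, v, w, hw, hlen⟩ := exists_len_one P hzero (hiff.mp hex)
  have h1mem : 1 ∈ {n : ℕ | ∃ (u v : I × G × Λ) (w : (commGraph P).Walk u v),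
      IsLeftPath P w ∧ w.length = n} := ⟨u, v, w, hw, hlen⟩
  refine le_antisymm (Nat.sInf_le h1mem) (Nat.one_le_iff_ne_zero.mpr ?_)
  intro h0
  have hmem := Nat.sInf_mem (⟨1, h1mem⟩ : Set.Nonempty _)
  rw [h0] at hmem
  obtain ⟨u', v', w', hw', hl'⟩ := hmem
  exact hw'.2.1 (w'.eq_of_length_eq_zero hl')
end
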